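/- In the Filipović space H_w, for x ≥ 0 and d > 0, the forward price functional satisfies J_{x,d}(h) = (1/d) ∫_0^d δ_{x+u}(h) du = ⟨h, h_{x,d}⟩_w for all h ∈ H_w, where h_{x,d} is continuous, nondecreasing, bounded by 1 + ∫_0^∞ 1/w(s) ds, and constant on [x+d, ∞). -/

import Mathlib

open MeasureTheory Real Set

/-- A Filipović weight function: measurable, increasing on `[0,∞)`, `w(0)=1`,
`w ≥ 1`, and `∫_0^∞ 1/w < ∞`. -/
structure FiliWeight (w : ℝ → ℝ) : Prop where
  meas : Measurable w
  mono : MonotoneOn w (Set.Ici 0)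
  one_le : ∀ x, 0 ≤ x → 1 ≤ w x
  at_zero : w 0 = 1
  int_inv : MeasureTheory.IntegrableOn (fun s => (w s)⁻¹) (Set.Ioi 0)

/-- Membership of `h` (with weak derivative `h'`) in the Filipović space `H_w`:
`h` is absolutely continuous on `[0,∞)` with derivative `h'` and finite weighted energy. -/
structure FiliMem (w : ℝ → ℝ) (h h' : ℝ → ℝ) : Prop where
  meas_deriv : Measurable h'
  abs_cont : ∀ x, 0 ≤ x → h x = h 0 + ∫ s in (0:ℝ)..x, h' s
  energy : MeasureTheory.IntegrableOn (fun y => (h' y)^2 * w y) (Set.Ioi 0)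

/-- The inner product `⟨f,g⟩_w = f(0)g(0) + ∫_0^∞ f'(y)g'(y) w(y) dy` on `H_w`. -/
noncomputable def filiInner (w f g f' g' : ℝ → ℝ) : ℝ :=
  f 0 * g 0 + ∫ y in Set.Ioi (0:ℝ), f' y * g' y * w y

/-- The squared norm `‖f‖_w^2 = |f(0)|^2 + ∫_0^∞ |f'(y)|^2 w(y) dy` on `H_w`. -/
noncomputable def filiNormSq (w f f' : ℝ → ℝ) : ℝ :=
  (f 0)^2 + ∫ y in Set.Ioi (0:ℝ), (f' y)^2 * w y

/-- The piecewise function `h_{x,d}` of the paper. -/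
noncomputable def hxd (w : ℝ → ℝ) (x d : ℝ) : ℝ → ℝ := fun y =>
  if y ≤ x then 1 + ∫ s in (0:ℝ)..y, (w s)⁻¹
  else (1 + ∫ s in (0:ℝ)..x, (w s)⁻¹) + ∫ s in (0:ℝ)..(min (y - x) d), (d - s) / (d * w (s + x))

/-- Its weak derivative. -/
noncomputable def hxd' (w : ℝ → ℝ) (x d : ℝ) : ℝ → ℝ := fun y =>
  if y ≤ x then (w y)⁻¹
  else if y ≤ x + d then (d - (y - x)) / (d * w y) else 0

private lemma abs_le_one_add_sq_mul (t c : ℝ) (hc : 1 ≤ c) : |t| ≤ 1 + t^2 * c := by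
  nlinarith [sq_abs t, abs_nonneg t, sq_nonneg (|t| - 1), sq_nonneg t]

private lemma primitive_mono {f : ℝ → ℝ} (hf : Integrable f) (h0 : ∀ s, 0 ≤ f s) :
    Monotone (fun t => ∫ s in (0:ℝ)..t, f s) := by
  intro a b hab
  have h1 := intervalIntegral.integral_add_adjacent_intervals
    (hf.intervalIntegrable (a := 0) (b := a)) (hf.intervalIntegrable (a := a) (b := b))
  have h2 : 0 ≤ ∫ s in a..b, f s :=
    intervalIntegral.integral_nonneg hab (fun u _ => h0 u)
  simp only []
  linarith [h1]

section Aux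

variable {w : ℝ → ℝ} {x d : ℝ}

private lemma wpos (hw : FiliWeight w) {y : ℝ} (hy : 0 ≤ y) : 0 < w y :=
  lt_of_lt_of_le one_pos (hw.one_le y hy)

private lemma int_f1 (hw : FiliWeight w) :
    Integrable ((Ioi (0:ℝ)).indicator fun s => (w s)⁻¹) :=
  (integrable_indicator_iff measurableSet_Ioi).2 hw.int_inv

private lemma f1_nonneg (hw : FiliWeight w) (s : ℝ) :
    0 ≤ (Ioi (0:ℝ)).indicator (fun s => (w s)⁻¹) s := by
  apply Set.indicator_nonneg
  intro t ht
  exact inv_nonneg.2 (le_of_lt (wpos hw (le_of_lt ht)))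

private lemma f1_eq (hw : FiliWeight w) {y : ℝ} (hy : 0 ≤ y) :
    ∫ s in (0:ℝ)..y, (w s)⁻¹
      = ∫ s in (0:ℝ)..y, (Ioi (0:ℝ)).indicator (fun s => (w s)⁻¹) s := by
  rw [intervalIntegral.integral_of_le hy, intervalIntegral.integral_of_le hy]
  exact setIntegral_congr_fun measurableSet_Ioc
    (fun s hs => (indicator_of_mem (mem_Ioi.2 hs.1) fun s => (w s)⁻¹).symm)

private lemma intgx (hw : FiliWeight w) (hx : 0 ≤ x) (hd : 0 < d) :
    IntegrableOn (fun s => (w (s + x))⁻¹) (Ioc 0 d) := by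
  have h1 : IntegrableOn (fun s => (w s)⁻¹) (Ioc x (x + d)) :=
    hw.int_inv.mono_set (fun z hz => mem_Ioi.2 (lt_of_le_of_lt hx hz.1))
  have h2 : IntervalIntegrable (fun s => (w s)⁻¹) volume x (x + d) :=
    (intervalIntegrable_iff_integrableOn_Ioc_of_le (by linarith)).2 h1
  have h3 := h2.comp_add_right x
  rw [sub_self, add_sub_cancel_left] at h3
  exact (intervalIntegrable_iff_integrableOn_Ioc_of_le hd.le).1 h3

private lemma g_nonneg (hw : FiliWeight w) (hx : 0 ≤ x) (hd : 0 < d) {s : ℝ}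
    (hs : s ∈ Ioc (0:ℝ) d) : 0 ≤ (d - s) / (d * w (s + x)) := by
  apply div_nonneg (by linarith [hs.2])
  exact mul_nonneg hd.le (le_of_lt (wpos hw (by linarith [hs.1])))

private lemma g_le (hw : FiliWeight w) (hx : 0 ≤ x) (hd : 0 < d) :
    ∀ s ∈ Ioc (0:ℝ) d, (d - s) / (d * w (s + x)) ≤ (w (s + x))⁻¹ := by
  intro s hs
  have hW : 0 < w (s + x) := wpos hw (by linarith [hs.1])
  have h1 : (d - s) / (d * w (s + x)) ≤ d / (d * w (s + x)) :=
    (div_le_div_iff_of_pos_right (by positivity)).2 (by linarith [hs.1])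
  have h2 : d / (d * w (s + x)) = (w (s + x))⁻¹ := by
    field_simp
  linarith

private lemma int_g (hw : FiliWeight w) (hx : 0 ≤ x) (hd : 0 < d) :
    IntegrableOn (fun s => (d - s) / (d * w (s + x))) (Ioc 0 d) := by
  refine Integrable.mono' (intgx hw hx hd) ?_ ?_
  · exact (((measurable_const.sub measurable_id).div
      (measurable_const.mul (hw.meas.comp (measurable_id.add_const x)))).aestronglyMeasurable).restrict
  · refine (ae_restrict_iff' measurableSet_Ioc).2 (ae_of_all _ fun s hs => ?_)
    rw [Real.norm_eq_abs, abs_of_nonneg (g_nonneg hw hx hd hs)]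
    exact g_le hw hx hd s hs

private lemma int_g1 (hw : FiliWeight w) (hx : 0 ≤ x) (hd : 0 < d) :
    Integrable ((Ioc (0:ℝ) d).indicator (fun s => (d - s) / (d * w (s + x)))) :=
  (integrable_indicator_iff measurableSet_Ioc).2 (int_g hw hx hd)

private lemma g1_nonneg (hw : FiliWeight w) (hx : 0 ≤ x) (hd : 0 < d) (s : ℝ) :
    0 ≤ (Ioc (0:ℝ) d).indicator (fun s => (d - s) / (d * w (s + x))) s := by
  by_cases hs : s ∈ Ioc (0:ℝ) d
  · rw [indicator_of_mem hs]; exact g_nonneg hw hx hd hs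
  · rw [indicator_of_notMem hs]

private lemma F2_nonpos (hw : FiliWeight w) (hx : 0 ≤ x) (hd : 0 < d) {t : ℝ} (ht : t ≤ 0) :
    ∫ s in (0:ℝ)..t, (Ioc (0:ℝ) d).indicator (fun s => (d - s) / (d * w (s + x))) s = 0 := by
  rw [intervalIntegral.integral_symm]
  have : EqOn ((Ioc (0:ℝ) d).indicator (fun s => (d - s) / (d * w (s + x))))
      (fun _ => (0:ℝ)) (uIcc t 0) := by
    intro s hs
    rw [uIcc_of_le ht] at hs
    exact indicator_of_notMem (fun hc => absurd hc.1 (not_lt.2 hs.2)) _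
  rw [intervalIntegral.integral_congr this, intervalIntegral.integral_const, smul_zero, neg_zero]

private lemma F2_eq (hw : FiliWeight w) (hx : 0 ≤ x) (hd : 0 < d) {m : ℝ}
    (hm0 : 0 ≤ m) (hmd : m ≤ d) :
    ∫ s in (0:ℝ)..m, (d - s) / (d * w (s + x))
      = ∫ s in (0:ℝ)..m, (Ioc (0:ℝ) d).indicator (fun s => (d - s) / (d * w (s + x))) s := by
  rw [intervalIntegral.integral_of_le hm0, intervalIntegral.integral_of_le hm0]
  refine setIntegral_congr_fun measurableSet_Ioc (fun s hs => ?_)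
  exact (indicator_of_mem (show s ∈ Ioc (0:ℝ) d from ⟨hs.1, hs.2.trans hmd⟩)
    fun s => (d - s) / (d * w (s + x))).symm

/-- Representation of `hxd` as a globally continuous function, on `[0,∞)`. -/
private lemma hxd_rep (hw : FiliWeight w) (hx : 0 ≤ x) (hd : 0 < d) {y : ℝ} (hy : 0 ≤ y) :
    hxd w x d y = 1 + (∫ s in (0:ℝ)..(min y x), (Ioi (0:ℝ)).indicator (fun s => (w s)⁻¹) s)
      + ∫ s in (0:ℝ)..(min (y - x) d),
          (Ioc (0:ℝ) d).indicator (fun s => (d - s) / (d * w (s + x))) s := by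
  by_cases hyx : y ≤ x
  · rw [hxd, if_pos hyx, min_eq_left hyx, ← f1_eq hw hy,
      F2_nonpos hw hx hd (le_trans (min_le_left _ _) (by linarith)), add_zero]
  · push_neg at hyx
    have hm0 : 0 < min (y - x) d := lt_min (by linarith) hd
    rw [hxd, if_neg (not_le.2 hyx), min_eq_right hyx.le, ← f1_eq hw hx,
      F2_eq hw hx hd hm0.le (min_le_right _ _), add_assoc]

end Aux

private lemma part1 {w : ℝ → ℝ} (hw : FiliWeight w) {x d : ℝ} (hx : 0 ≤ x) (hd : 0 < d)
    (h h' : ℝ → ℝ) (hm : FiliMem w h h') :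
    (1 / d) * ∫ u in (0:ℝ)..d, h (x + u)
      = filiInner w h (hxd w x d) h' (hxd' w x d) := by
  set ht' : ℝ → ℝ := (Ioc (0:ℝ) (x + d)).indicator h' with hht'
  set ψ : ℝ → ℝ := fun y => max 0 (min d (x + d - y)) with hψ
  have hIoc : IntegrableOn h' (Ioc (0:ℝ) (x + d)) := by
    refine Integrable.mono' (g := fun y => 1 + (h' y)^2 * w y)
      ?_ hm.meas_deriv.aestronglyMeasurable.restrict ?_
    · exact (integrableOn_const measure_Ioc_lt_top.ne).add
        (hm.energy.mono_set Ioc_subset_Ioi_self)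
    · refine (ae_restrict_iff' measurableSet_Ioc).2 (ae_of_all _ fun y hy => ?_)
      rw [Real.norm_eq_abs]
      exact abs_le_one_add_sq_mul _ _ (hw.one_le y (le_of_lt hy.1))
  have int_ht' : Integrable ht' := (integrable_indicator_iff measurableSet_Ioc).2 hIoc
  have meas_ht' : Measurable ht' := hm.meas_deriv.indicator measurableSet_Ioc
  haveI : IsFiniteMeasure (volume.restrict (Ioc (0:ℝ) d)) :=
    ⟨by rw [Measure.restrict_apply_univ]; exact measure_Ioc_lt_top⟩
  set K : ℝ → ℝ → ℝ := fun u y => if y ≤ x + u then ht' y else 0 with hK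
  have hKint : Integrable (Function.uncurry K)
      ((volume.restrict (Ioc (0:ℝ) d)).prod volume) := by
    refine Integrable.mono' (g := fun z : ℝ × ℝ => (1:ℝ) * |ht' z.2|)
      ((integrable_const (1:ℝ)).mul_prod int_ht'.abs) ?_ ?_
    · exact (Measurable.ite (measurableSet_le measurable_snd (measurable_const.add measurable_fst))
        (meas_ht'.comp measurable_snd) measurable_const).aestronglyMeasurable
    · refine ae_of_all _ fun z => ?_
      simp only [Function.uncurry, hK, one_mul, Real.norm_eq_abs]
      split <;> simp [abs_nonneg]
  -- inner integral in y, for u ∈ Ioc 0 d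
  have inner1 : ∀ u ∈ Ioc (0:ℝ) d, (∫ y, K u y) = ∫ s in (0:ℝ)..(x + u), h' s := by
    intro u hu
    have hxu : (0:ℝ) ≤ x + u := by linarith [hu.1]
    have e1 : K u = (Iic (x + u)).indicator ht' := by
      funext y; simp only [hK, indicator_apply, mem_Iic]
    rw [e1, integral_indicator measurableSet_Iic, hht',
      setIntegral_indicator measurableSet_Ioc]
    have hset : Iic (x + u) ∩ Ioc 0 (x + d) = Ioc 0 (x + u) := by
      ext z
      simp only [mem_inter_iff, mem_Iic, mem_Ioc]
      constructor
      · rintro ⟨h1, h2, h3⟩; exact ⟨h2, h1⟩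
      · rintro ⟨h1, h2⟩; exact ⟨h2, h1, by linarith [hu.2]⟩
    rw [hset, intervalIntegral.integral_of_le hxu]
  have step1 : ∫ u in Ioc (0:ℝ) d, h (x + u) = ∫ u in Ioc (0:ℝ) d, (h 0 + ∫ y, K u y) := by
    refine setIntegral_congr_fun measurableSet_Ioc fun u hu => ?_
    rw [inner1 u hu, ← hm.abs_cont (x + u) (by linarith [hu.1])]
  have intKu : Integrable (fun u => ∫ y, K u y) (volume.restrict (Ioc (0:ℝ) d)) := by
    have := hKint.integral_prod_left
    simpa [Function.uncurry] using this
  have step2 : ∫ u in Ioc (0:ℝ) d, (h 0 + ∫ y, K u y)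
      = d * h 0 + ∫ u in Ioc (0:ℝ) d, ∫ y, K u y := by
    rw [integral_add (integrable_const _) intKu]
    congr 1
    rw [integral_const, measureReal_restrict_apply_univ, measureReal_def, Real.volume_Ioc, smul_eq_mul, sub_zero,
      ENNReal.toReal_ofReal hd.le]
  have step3 : ∫ u in Ioc (0:ℝ) d, ∫ y, K u y = ∫ y, ∫ u in Ioc (0:ℝ) d, K u y :=
    integral_integral_swap hKint
  have inner2 : ∀ y, (∫ u in Ioc (0:ℝ) d, K u y) = ht' y * ψ y := by
    intro y
    have e1 : (fun u => K u y) = (Ici (y - x)).indicator (fun _ => ht' y) := by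
      funext u
      simp only [hK, indicator_apply, mem_Ici, sub_le_iff_le_add']
    rw [e1, setIntegral_indicator measurableSet_Ici, setIntegral_const, measureReal_def]
    rcases le_or_gt (y - x) 0 with hc | hc
    · have hset : Ioc (0:ℝ) d ∩ Ici (y - x) = Ioc 0 d :=
        inter_eq_left.2 (fun u hu => le_trans hc (le_of_lt hu.1))
      have hψy : ψ y = d := by
        rw [hψ]
        simp only []
        rw [min_eq_left (by linarith), max_eq_right hd.le]
      rw [hset, Real.volume_Ioc, hψy, sub_zero, ENNReal.toReal_ofReal hd.le, smul_eq_mul,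
        mul_comm]
    · have hset : Ioc (0:ℝ) d ∩ Ici (y - x) = Icc (y - x) d := by
        ext u
        simp only [mem_inter_iff, mem_Ioc, mem_Ici, mem_Icc]
        constructor
        · rintro ⟨⟨h1, h2⟩, h3⟩; exact ⟨h3, h2⟩
        · rintro ⟨h1, h2⟩; exact ⟨⟨lt_of_lt_of_le hc h1, h2⟩, h1⟩
      rw [hset, Real.volume_Icc]
      rcases le_or_gt y (x + d) with hyd | hyd
      · have hψy : ψ y = x + d - y := by
          rw [hψ]; simp only []
          rw [min_eq_right (by linarith), max_eq_right (by linarith)]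
        rw [hψy, ENNReal.toReal_ofReal (by linarith), smul_eq_mul, mul_comm]
        ring_nf
      · have hψy : ψ y = 0 := by
          rw [hψ]; simp only []
          rw [min_eq_right (by linarith), max_eq_left (by linarith)]
        rw [hψy, ENNReal.ofReal_of_nonpos (by linarith)]
        simp
  have step4 : ∫ y, ht' y * ψ y = ∫ y in Ioc (0:ℝ) (x + d), h' y * ψ y := by
    have e : (fun y => ht' y * ψ y) = (Ioc (0:ℝ) (x + d)).indicator (fun y => h' y * ψ y) := by
      funext y
      rw [hht']
      by_cases hy : y ∈ Ioc (0:ℝ) (x + d) <;> simp [indicator_apply, hy]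
    rw [e, integral_indicator measurableSet_Ioc]
  have key : ∫ u in Ioc (0:ℝ) d, h (x + u)
      = d * h 0 + ∫ y in Ioc (0:ℝ) (x + d), h' y * ψ y := by
    rw [step1, step2, step3]
    congr 1
    rw [← step4]
    exact integral_congr_ae (ae_of_all _ inner2)
  -- the right-hand side
  have h0 : hxd w x d 0 = 1 := by
    simp [hxd, hx]
  have rhs : filiInner w h (hxd w x d) h' (hxd' w x d)
      = h 0 + (∫ y in Ioc (0:ℝ) (x + d), h' y * ψ y) / d := by
    rw [filiInner, h0, mul_one]
    congr 1
    have ptwise : ∀ y ∈ Ioi (0:ℝ), h' y * hxd' w x d y * w y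
        = (Ioc (0:ℝ) (x + d)).indicator (fun y => h' y * ψ y / d) y := by
      intro y hy
      have hy0 : (0:ℝ) < y := hy
      have hwy : w y ≠ 0 := ne_of_gt (lt_of_lt_of_le one_pos (hw.one_le y hy0.le))
      by_cases h1 : y ≤ x
      · have hmem : y ∈ Ioc (0:ℝ) (x + d) := ⟨hy0, by linarith⟩
        have hψy : ψ y = d := by
          rw [hψ]; simp only []
          rw [min_eq_left (by linarith), max_eq_right hd.le]
        rw [hxd', if_pos h1, indicator_of_mem hmem, hψy]
        field_simp
      · by_cases h2 : y ≤ x + d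
        · have hmem : y ∈ Ioc (0:ℝ) (x + d) := ⟨hy0, h2⟩
          have hψy : ψ y = x + d - y := by
            rw [hψ]; simp only []
            rw [min_eq_right (by linarith), max_eq_right (by linarith)]
          rw [hxd']
          simp only [if_neg h1, if_pos h2]
          rw [indicator_of_mem hmem, hψy]
          field_simp
          ring
        · rw [hxd']
          simp only [if_neg h1, if_neg h2]
          rw [indicator_of_notMem (fun hc => h2 hc.2)]
          simp
    rw [setIntegral_congr_fun measurableSet_Ioi ptwise,
      setIntegral_indicator measurableSet_Ioc,
      inter_eq_right.2 Ioc_subset_Ioi_self, integral_div]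
  rw [rhs, intervalIntegral.integral_of_le hd.le, key]
  field_simp

theorem statement11 (w : ℝ → ℝ) (hw : FiliWeight w) (x : ℝ) (hx : 0 ≤ x)
    (d : ℝ) (hd : 0 < d) :
    (∀ h h' : ℝ → ℝ, FiliMem w h h' →
      (1 / d) * ∫ u in (0:ℝ)..d, h (x + u)
        = filiInner w h (hxd w x d) h' (hxd' w x d)) ∧
    ContinuousOn (hxd w x d) (Set.Ici 0) ∧
    MonotoneOn (hxd w x d) (Set.Ici 0) ∧
    (∀ y : ℝ, 0 ≤ y → hxd w x d y ≤ 1 + ∫ s in Set.Ioi (0:ℝ), (w s)⁻¹) ∧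
    (∀ y : ℝ, x + d ≤ y → hxd w x d y = hxd w x d (x + d)) := by
  refine ⟨fun h h' hm => part1 hw hx hd h h' hm, ?_, ?_, ?_, ?_⟩
  · -- continuity
    have c1 : Continuous (fun t => ∫ s in (0:ℝ)..t,
        (Ioi (0:ℝ)).indicator (fun s => (w s)⁻¹) s) := (int_f1 hw).continuous_primitive 0
    have c2 : Continuous (fun t => ∫ s in (0:ℝ)..t,
        (Ioc (0:ℝ) d).indicator (fun s => (d - s) / (d * w (s + x))) s) :=
      (int_g1 hw hx hd).continuous_primitive 0
    have cont : Continuous (fun y : ℝ => 1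
        + (∫ s in (0:ℝ)..(min y x), (Ioi (0:ℝ)).indicator (fun s => (w s)⁻¹) s)
        + ∫ s in (0:ℝ)..(min (y - x) d),
            (Ioc (0:ℝ) d).indicator (fun s => (d - s) / (d * w (s + x))) s) :=
      (continuous_const.add (c1.comp (continuous_id.min continuous_const))).add
        (c2.comp ((continuous_id.sub continuous_const).min continuous_const))
    exact cont.continuousOn.congr (fun y hy => hxd_rep hw hx hd hy)
  · -- monotonicity
    intro a ha b hb hab
    rw [hxd_rep hw hx hd ha, hxd_rep hw hx hd hb]
    have m1 := primitive_mono (int_f1 hw) (f1_nonneg hw) (min_le_min hab (le_refl x))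
    have m2 := primitive_mono (int_g1 hw hx hd) (g1_nonneg hw hx hd)
      (min_le_min (by linarith : a - x ≤ b - x) (le_refl d))
    simp only [] at m1 m2
    linarith
  · -- bound
    intro y hy
    rw [hxd_rep hw hx hd hy]
    have b1 := primitive_mono (int_f1 hw) (f1_nonneg hw) (min_le_right y x)
    have b2 := primitive_mono (int_g1 hw hx hd) (g1_nonneg hw hx hd) (min_le_right (y - x) d)
    simp only [] at b1 b2
    have e1 : (∫ s in (0:ℝ)..x, (Ioi (0:ℝ)).indicator (fun s => (w s)⁻¹) s)
        = ∫ s in Ioc (0:ℝ) x, (w s)⁻¹ := by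
      rw [← f1_eq hw hx, intervalIntegral.integral_of_le hx]
    have e2 : (∫ s in (0:ℝ)..d, (Ioc (0:ℝ) d).indicator
          (fun s => (d - s) / (d * w (s + x))) s)
        = ∫ s in Ioc (0:ℝ) d, (d - s) / (d * w (s + x)) := by
      rw [← F2_eq hw hx hd hd.le (le_refl d), intervalIntegral.integral_of_le hd.le]
    have e3 : ∫ s in Ioc (0:ℝ) d, (d - s) / (d * w (s + x))
        ≤ ∫ s in Ioc (0:ℝ) d, (w (s + x))⁻¹ :=
      setIntegral_mono_on (int_g hw hx hd) (intgx hw hx hd) measurableSet_Ioc (g_le hw hx hd)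
    have e4 : ∫ s in Ioc (0:ℝ) d, (w (s + x))⁻¹ = ∫ s in Ioc x (x + d), (w s)⁻¹ := by
      rw [← intervalIntegral.integral_of_le hd.le,
        ← intervalIntegral.integral_of_le (by linarith : x ≤ x + d)]
      have := intervalIntegral.integral_comp_add_right (a := (0:ℝ)) (b := d)
        (fun s => (w s)⁻¹) x
      rw [zero_add, add_comm d x] at this
      exact this
    have i1 : IntervalIntegrable (fun s => (w s)⁻¹) volume 0 x :=
      (intervalIntegrable_iff_integrableOn_Ioc_of_le hx).2
        (hw.int_inv.mono_set Ioc_subset_Ioi_self)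
    have i2 : IntervalIntegrable (fun s => (w s)⁻¹) volume x (x + d) :=
      (intervalIntegrable_iff_integrableOn_Ioc_of_le (by linarith)).2
        (hw.int_inv.mono_set (fun z hz => mem_Ioi.2 (lt_of_le_of_lt hx hz.1)))
    have e5 : (∫ s in Ioc (0:ℝ) x, (w s)⁻¹) + (∫ s in Ioc x (x + d), (w s)⁻¹)
        = ∫ s in Ioc (0:ℝ) (x + d), (w s)⁻¹ := by
      rw [← intervalIntegral.integral_of_le hx,
        ← intervalIntegral.integral_of_le (by linarith : x ≤ x + d),
        ← intervalIntegral.integral_of_le (by linarith : (0:ℝ) ≤ x + d)]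
      exact intervalIntegral.integral_add_adjacent_intervals i1 i2
    have e6 : ∫ s in Ioc (0:ℝ) (x + d), (w s)⁻¹ ≤ ∫ s in Ioi (0:ℝ), (w s)⁻¹ := by
      refine setIntegral_mono_set hw.int_inv ?_ (HasSubset.Subset.eventuallyLE Ioc_subset_Ioi_self)
      refine (ae_restrict_iff' measurableSet_Ioi).2 (ae_of_all _ fun s hs => ?_)
      exact inv_nonneg.2 (le_of_lt (wpos hw (le_of_lt hs)))
    linarith
  · -- constant after x + d
    intro y hy
    have h1 : ¬ y ≤ x := by linarith
    have h2 : ¬ x + d ≤ x := by linarith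
    simp only [hxd, if_neg h1, if_neg h2,
      min_eq_right (show d ≤ y - x by linarith), add_sub_cancel_left, min_self]
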